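/- Let I ⊆ ℝ be an open interval and f, g : I → ℝ smooth with f > 0 and g' ≠ 0 on I. Then, as differential operators on smooth functions F(t,x,u) on ℝ × I × ℝ, the commutators satisfy: X₁(X₃F) − X₃(X₁F) = 4·X₁F, X₃(X₄F) − X₄(X₃F) = −2·X₄F, and X₁(X₂F) − X₂(X₁F) = 0, X₁(X₄F) − X₄(X₁F) = 0, X₂(X₃F) − X₃(X₂F) = 0, X₂(X₄F) − X₄(X₂F) = 0, for every smooth F. (That is, the only nonzero commutation relations among the symmetry generators are [X₁,X₃] = 4X₁ and [X₃,X₄] = −2X₄.) -/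

import Mathlib

namespace S4Aux

noncomputable def pd (v : ℝ × ℝ × ℝ) (Q : ℝ × ℝ × ℝ → ℝ) (p : ℝ × ℝ × ℝ) : ℝ :=
  fderiv ℝ Q p v

lemma contDiff_pd {Q : ℝ × ℝ × ℝ → ℝ} (hQ : ContDiff ℝ (⊤ : ℕ∞) Q) (v : ℝ × ℝ × ℝ) :
    ContDiff ℝ (⊤ : ℕ∞) (pd v Q) := by
  have h1 : ContDiff ℝ (⊤ : ℕ∞) (fderiv ℝ Q) := hQ.fderiv_right (by simp)
  exact (ContinuousLinearMap.apply ℝ ℝ v).contDiff.comp h1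

lemma hasDerivAt_1 {Q : ℝ × ℝ × ℝ → ℝ} {t x u : ℝ} (hQ : DifferentiableAt ℝ Q (t, x, u)) :
    HasDerivAt (fun s => Q (s, x, u)) (pd (1, 0, 0) Q (t, x, u)) t := by
  have h : HasDerivAt (fun s : ℝ => ((s, x, u) : ℝ × ℝ × ℝ)) ((1 : ℝ), (0 : ℝ), (0 : ℝ)) t :=
    (hasDerivAt_id t).prodMk ((hasDerivAt_const t x).prodMk (hasDerivAt_const t u))
  exact hQ.hasFDerivAt.comp_hasDerivAt t h

lemma hasDerivAt_2 {Q : ℝ × ℝ × ℝ → ℝ} {t x u : ℝ} (hQ : DifferentiableAt ℝ Q (t, x, u)) :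
    HasDerivAt (fun y => Q (t, y, u)) (pd (0, 1, 0) Q (t, x, u)) x := by
  have h : HasDerivAt (fun y : ℝ => ((t, y, u) : ℝ × ℝ × ℝ)) ((0 : ℝ), (1 : ℝ), (0 : ℝ)) x :=
    (hasDerivAt_const x t).prodMk ((hasDerivAt_id x).prodMk (hasDerivAt_const x u))
  exact hQ.hasFDerivAt.comp_hasDerivAt x h

lemma hasDerivAt_3 {Q : ℝ × ℝ × ℝ → ℝ} {t x u : ℝ} (hQ : DifferentiableAt ℝ Q (t, x, u)) :
    HasDerivAt (fun v => Q (t, x, v)) (pd (0, 0, 1) Q (t, x, u)) u := by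
  have h : HasDerivAt (fun v : ℝ => ((t, x, v) : ℝ × ℝ × ℝ)) ((0 : ℝ), (0 : ℝ), (1 : ℝ)) u :=
    (hasDerivAt_const u t).prodMk ((hasDerivAt_const u x).prodMk (hasDerivAt_id u))
  exact hQ.hasFDerivAt.comp_hasDerivAt u h

lemma pd_symm {Q : ℝ × ℝ × ℝ → ℝ} (hQ : ContDiff ℝ (⊤ : ℕ∞) Q) (p v w : ℝ × ℝ × ℝ) :
    pd w (pd v Q) p = pd v (pd w Q) p := by
  have hsym : IsSymmSndFDerivAt ℝ Q p :=
    (hQ.contDiffAt).isSymmSndFDerivAt (by simp; exact WithTop.coe_le_coe.mpr le_top)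
  have h1 : ContDiff ℝ (⊤ : ℕ∞) (fderiv ℝ Q) := hQ.fderiv_right (by simp)
  have hd : DifferentiableAt ℝ (fderiv ℝ Q) p :=
    (h1.differentiable (by decide)).differentiableAt
  have key : ∀ z : ℝ × ℝ × ℝ,
      fderiv ℝ (pd z Q) p = (ContinuousLinearMap.apply ℝ ℝ z).comp (fderiv ℝ (fderiv ℝ Q) p) := by
    intro z
    have h := ((ContinuousLinearMap.apply ℝ ℝ z).hasFDerivAt).comp p hd.hasFDerivAt
    exact h.fderiv
  show fderiv ℝ (pd v Q) p w = fderiv ℝ (pd w Q) p v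
  rw [key v, key w]
  exact hsym.eq w v

end S4Aux

/-- The operator `X₁F = ∂F/∂t`. -/
noncomputable def X1 (F : ℝ → ℝ → ℝ → ℝ) (t x u : ℝ) : ℝ :=
  deriv (fun s => F s x u) t

/-- The operator `X₂F = u·∂F/∂u`. -/
noncomputable def X2 (F : ℝ → ℝ → ℝ → ℝ) (t x u : ℝ) : ℝ :=
  u * deriv (fun v => F t x v) u

/-- The operator `X₃F = 4t·F_t + (2g/g')·F_x − (f'g/(fg') + 3g·g''/g'²)·u·F_u`. -/
noncomputable def X3 (f g : ℝ → ℝ) (F : ℝ → ℝ → ℝ → ℝ) (t x u : ℝ) : ℝ :=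
  4 * t * deriv (fun s => F s x u) t
    + (2 * g x / deriv g x) * deriv (fun y => F t y u) x
    - (deriv f x * g x / (f x * deriv g x)
        + 3 * g x * (deriv^[2] g x) / (deriv g x)^2) * u * deriv (fun v => F t x v) u

/-- The operator `X₄F = (2/g')·F_x − (f'/(fg') + 3g''/g'²)·u·F_u`. -/
noncomputable def X4 (f g : ℝ → ℝ) (F : ℝ → ℝ → ℝ → ℝ) (t x u : ℝ) : ℝ :=
  (2 / deriv g x) * deriv (fun y => F t y u) x
    - (deriv f x / (f x * deriv g x)
        + 3 * (deriv^[2] g x) / (deriv g x)^2) * u * deriv (fun v => F t x v) u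

set_option maxHeartbeats 2000000 in
open S4Aux in
/-- the only nonzero commutation relations among the symmetry
generators are `[X₁,X₃] = 4X₁` and `[X₃,X₄] = −2X₄`. -/
theorem statement4
    (I : Set ℝ) (hIopen : IsOpen I) (hIinterval : I.OrdConnected)
    (f g : ℝ → ℝ)
    (hf : ContDiffOn ℝ (⊤ : ℕ∞) f I) (hg : ContDiffOn ℝ (⊤ : ℕ∞) g I)
    (hfpos : ∀ x ∈ I, 0 < f x) (hg' : ∀ x ∈ I, deriv g x ≠ 0) :
    ∀ F : ℝ → ℝ → ℝ → ℝ,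
      ContDiff ℝ (⊤ : ℕ∞) (fun p : ℝ × ℝ × ℝ => F p.1 p.2.1 p.2.2) →
      ∀ t : ℝ, ∀ x ∈ I, ∀ u : ℝ,
        X1 (X3 f g F) t x u - X3 f g (X1 F) t x u = 4 * X1 F t x u ∧
        X3 f g (X4 f g F) t x u - X4 f g (X3 f g F) t x u = -2 * X4 f g F t x u ∧
        X1 (X2 F) t x u - X2 (X1 F) t x u = 0 ∧
        X1 (X4 f g F) t x u - X4 f g (X1 F) t x u = 0 ∧
        X2 (X3 f g F) t x u - X3 f g (X2 F) t x u = 0 ∧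
        X2 (X4 f g F) t x u - X4 f g (X2 F) t x u = 0 := by
  intro F hF t x hx u
  let P : ℝ × ℝ × ℝ → ℝ := fun p => F p.1 p.2.1 p.2.2
  have hP : ContDiff ℝ (⊤ : ℕ∞) P := hF
  have hPd : Differentiable ℝ P := hP.differentiable (by decide)
  have hd1 : Differentiable ℝ (pd (1,0,0) P) := (contDiff_pd hP _).differentiable (by decide)
  have hd2 : Differentiable ℝ (pd (0,1,0) P) := (contDiff_pd hP _).differentiable (by decide)
  have hd3 : Differentiable ℝ (pd (0,0,1) P) := (contDiff_pd hP _).differentiable (by decide)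
  -- first-level rewrites
  have hrw1 : ∀ a b c : ℝ, deriv (fun s => F s b c) a = pd (1,0,0) P (a,b,c) :=
    fun a b c => (hasDerivAt_1 (hPd (a,b,c))).deriv
  have hrw2 : ∀ a b c : ℝ, deriv (fun y => F a y c) b = pd (0,1,0) P (a,b,c) :=
    fun a b c => (hasDerivAt_2 (hPd (a,b,c))).deriv
  have hrw3 : ∀ a b c : ℝ, deriv (fun v => F a b v) c = pd (0,0,1) P (a,b,c) :=
    fun a b c => (hasDerivAt_3 (hPd (a,b,c))).deriv
  -- second-level rewrites
  have h2nd1 : ∀ (v : ℝ × ℝ × ℝ) (a b c : ℝ),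
      deriv (fun s => pd v P (s,b,c)) a = pd (1,0,0) (pd v P) (a,b,c) :=
    fun v a b c => (hasDerivAt_1 (((contDiff_pd hP v).differentiable (by decide)) (a,b,c))).deriv
  have h2nd2 : ∀ (v : ℝ × ℝ × ℝ) (a b c : ℝ),
      deriv (fun y => pd v P (a,y,c)) b = pd (0,1,0) (pd v P) (a,b,c) :=
    fun v a b c => (hasDerivAt_2 (((contDiff_pd hP v).differentiable (by decide)) (a,b,c))).deriv
  have h2nd3 : ∀ (v : ℝ × ℝ × ℝ) (a b c : ℝ),
      deriv (fun w => pd v P (a,b,w)) c = pd (0,0,1) (pd v P) (a,b,c) :=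
    fun v a b c => (hasDerivAt_3 (((contDiff_pd hP v).differentiable (by decide)) (a,b,c))).deriv
  -- symmetry
  have s21 : ∀ q, pd (1,0,0) (pd (0,1,0) P) q = pd (0,1,0) (pd (1,0,0) P) q :=
    fun q => pd_symm hP q (0,1,0) (1,0,0)
  have s31 : ∀ q, pd (1,0,0) (pd (0,0,1) P) q = pd (0,0,1) (pd (1,0,0) P) q :=
    fun q => pd_symm hP q (0,0,1) (1,0,0)
  have s32 : ∀ q, pd (0,1,0) (pd (0,0,1) P) q = pd (0,0,1) (pd (0,1,0) P) q :=
    fun q => pd_symm hP q (0,0,1) (0,1,0)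
  -- HasDerivAt of the pd's along lines at (t,x,u)
  have hq1t : HasDerivAt (fun s => pd (1,0,0) P (s,x,u)) (pd (1,0,0) (pd (1,0,0) P) (t,x,u)) t :=
    hasDerivAt_1 (hd1 _)
  have hq2t : HasDerivAt (fun s => pd (0,1,0) P (s,x,u)) (pd (1,0,0) (pd (0,1,0) P) (t,x,u)) t :=
    hasDerivAt_1 (hd2 _)
  have hq3t : HasDerivAt (fun s => pd (0,0,1) P (s,x,u)) (pd (1,0,0) (pd (0,0,1) P) (t,x,u)) t :=
    hasDerivAt_1 (hd3 _)
  have hq1x : HasDerivAt (fun y => pd (1,0,0) P (t,y,u)) (pd (0,1,0) (pd (1,0,0) P) (t,x,u)) x :=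
    hasDerivAt_2 (hd1 _)
  have hq2x : HasDerivAt (fun y => pd (0,1,0) P (t,y,u)) (pd (0,1,0) (pd (0,1,0) P) (t,x,u)) x :=
    hasDerivAt_2 (hd2 _)
  have hq3x : HasDerivAt (fun y => pd (0,0,1) P (t,y,u)) (pd (0,1,0) (pd (0,0,1) P) (t,x,u)) x :=
    hasDerivAt_2 (hd3 _)
  have hq1u : HasDerivAt (fun v => pd (1,0,0) P (t,x,v)) (pd (0,0,1) (pd (1,0,0) P) (t,x,u)) u :=
    hasDerivAt_3 (hd1 _)
  have hq2u : HasDerivAt (fun v => pd (0,1,0) P (t,x,v)) (pd (0,0,1) (pd (0,1,0) P) (t,x,u)) u :=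
    hasDerivAt_3 (hd2 _)
  have hq3u : HasDerivAt (fun v => pd (0,0,1) P (t,x,v)) (pd (0,0,1) (pd (0,0,1) P) (t,x,u)) u :=
    hasDerivAt_3 (hd3 _)
  -- coefficient facts
  have hxnhds : I ∈ nhds x := hIopen.mem_nhds hx
  have hGne : deriv g x ≠ 0 := hg' x hx
  have hfne : f x ≠ 0 := (hfpos x hx).ne'
  have hfd : DifferentiableAt ℝ f x := ((hf.contDiffAt hxnhds).differentiableAt (by decide))
  have hgd : DifferentiableAt ℝ g x := ((hg.contDiffAt hxnhds).differentiableAt (by decide))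
  have hdfC : ContDiffOn ℝ (⊤ : ℕ∞) (deriv f) I := hf.deriv_of_isOpen hIopen (by decide)
  have hdf : DifferentiableAt ℝ (deriv f) x :=
    ((hdfC.contDiffAt hxnhds).differentiableAt (by decide))
  have hdgC : ContDiffOn ℝ (⊤ : ℕ∞) (deriv g) I := hg.deriv_of_isOpen hIopen (by decide)
  have hdg : DifferentiableAt ℝ (deriv g) x :=
    ((hdgC.contDiffAt hxnhds).differentiableAt (by decide))
  have hddgC : ContDiffOn ℝ (⊤ : ℕ∞) (deriv (deriv g)) I := hdgC.deriv_of_isOpen hIopen (by decide)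
  have hddg : DifferentiableAt ℝ (deriv (deriv g)) x :=
    ((hddgC.contDiffAt hxnhds).differentiableAt (by decide))
  have hit : deriv^[2] g = deriv (deriv g) := rfl
  have hgx : HasDerivAt g (deriv g x) x := hgd.hasDerivAt
  have hC2diff : DifferentiableAt ℝ (fun y => 2 / deriv g y) x :=
    (differentiableAt_const 2).div hdg hGne
  have hC2 : HasDerivAt (fun y => 2 / deriv g y) (deriv (fun y => 2 / deriv g y) x) x :=
    hC2diff.hasDerivAt
  have hDdiff : DifferentiableAt ℝ
      (fun y => deriv f y / (f y * deriv g y) + 3 * deriv^[2] g y / deriv g y ^ 2) x := by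
    rw [hit]
    exact (hdf.div (hfd.mul hdg) (mul_ne_zero hfne hGne)).add
      (((differentiableAt_const 3).mul hddg).div (hdg.pow 2) (pow_ne_zero 2 hGne))
  have hD : HasDerivAt (fun y => deriv f y / (f y * deriv g y) + 3 * deriv^[2] g y / deriv g y ^ 2)
      (deriv (fun y => deriv f y / (f y * deriv g y) + 3 * deriv^[2] g y / deriv g y ^ 2) x) x :=
    hDdiff.hasDerivAt
  have hA : HasDerivAt (fun y => 2 * g y / deriv g y)
      (deriv g x * (2 / deriv g x) + g x * deriv (fun y => 2 / deriv g y) x) x := by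
    have h : (fun y => 2 * g y / deriv g y) = fun y => g y * (2 / deriv g y) := by
      funext y; ring
    rw [h]; exact hgx.mul hC2
  have hB : HasDerivAt
      (fun y => deriv f y * g y / (f y * deriv g y) + 3 * g y * deriv^[2] g y / deriv g y ^ 2)
      (deriv g x * (deriv f x / (f x * deriv g x) + 3 * deriv^[2] g x / deriv g x ^ 2)
        + g x * deriv (fun y => deriv f y / (f y * deriv g y) + 3 * deriv^[2] g y / deriv g y ^ 2) x) x := by
    have h : (fun y => deriv f y * g y / (f y * deriv g y) + 3 * g y * deriv^[2] g y / deriv g y ^ 2)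
        = fun y => g y * (deriv f y / (f y * deriv g y) + 3 * deriv^[2] g y / deriv g y ^ 2) := by
      funext y; ring
    rw [h]; exact hgx.mul hD
  refine ⟨?_, ?_, ?_, ?_, ?_, ?_⟩
  · -- [X1,X3] = 4 X1
    simp only [X1, X3, hrw1, hrw2, hrw3, h2nd1, h2nd2, h2nd3]
    have H : HasDerivAt
        (fun s => 4 * s * pd (1,0,0) P (s,x,u) + 2 * g x / deriv g x * pd (0,1,0) P (s,x,u) -
          (deriv f x * g x / (f x * deriv g x) + 3 * g x * deriv^[2] g x / deriv g x ^ 2) * u *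
            pd (0,0,1) P (s,x,u)) _ t :=
      ((((hasDerivAt_id' t).const_mul 4).mul hq1t).add
        (hq2t.const_mul (2 * g x / deriv g x))).sub
        (hq3t.const_mul ((deriv f x * g x / (f x * deriv g x)
          + 3 * g x * deriv^[2] g x / deriv g x ^ 2) * u))
    rw [H.deriv]
    simp only [s21, s31, s32]
    ring
  · -- [X3,X4] = -2 X4
    simp only [X3, X4, hrw1, hrw2, hrw3, h2nd1, h2nd2, h2nd3]
    have Ht : HasDerivAt (fun s => 2 / deriv g x * pd (0,1,0) P (s,x,u) -
        (deriv f x / (f x * deriv g x) + 3 * deriv^[2] g x / deriv g x ^ 2) * u *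
          pd (0,0,1) P (s,x,u)) _ t :=
      (hq2t.const_mul (2 / deriv g x)).sub
        (hq3t.const_mul ((deriv f x / (f x * deriv g x) + 3 * deriv^[2] g x / deriv g x ^ 2) * u))
    have Hx : HasDerivAt (fun y => 2 / deriv g y * pd (0,1,0) P (t,y,u) -
        (deriv f y / (f y * deriv g y) + 3 * deriv^[2] g y / deriv g y ^ 2) * u *
          pd (0,0,1) P (t,y,u)) _ x :=
      (hC2.mul hq2x).sub ((hD.mul_const u).mul hq3x)
    have Hu : HasDerivAt (fun v => 2 / deriv g x * pd (0,1,0) P (t,x,v) -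
        (deriv f x / (f x * deriv g x) + 3 * deriv^[2] g x / deriv g x ^ 2) * v *
          pd (0,0,1) P (t,x,v)) _ u :=
      (hq2u.const_mul (2 / deriv g x)).sub
        (((hasDerivAt_id' u).const_mul (deriv f x / (f x * deriv g x)
          + 3 * deriv^[2] g x / deriv g x ^ 2)).mul hq3u)
    have Kx : HasDerivAt (fun y => 4 * t * pd (1,0,0) P (t,y,u)
        + 2 * g y / deriv g y * pd (0,1,0) P (t,y,u) -
        (deriv f y * g y / (f y * deriv g y) + 3 * g y * deriv^[2] g y / deriv g y ^ 2) * u *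
          pd (0,0,1) P (t,y,u)) _ x :=
      ((hq1x.const_mul (4 * t)).add (hA.mul hq2x)).sub ((hB.mul_const u).mul hq3x)
    have Ku : HasDerivAt (fun v => 4 * t * pd (1,0,0) P (t,x,v)
        + 2 * g x / deriv g x * pd (0,1,0) P (t,x,v) -
        (deriv f x * g x / (f x * deriv g x) + 3 * g x * deriv^[2] g x / deriv g x ^ 2) * v *
          pd (0,0,1) P (t,x,v)) _ u :=
      ((hq1u.const_mul (4 * t)).add (hq2u.const_mul (2 * g x / deriv g x))).sub
        (((hasDerivAt_id' u).const_mul (deriv f x * g x / (f x * deriv g x)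
          + 3 * g x * deriv^[2] g x / deriv g x ^ 2)).mul hq3u)
    rw [Ht.deriv, Hx.deriv, Hu.deriv, Kx.deriv, Ku.deriv]
    simp only [s21, s31, s32]
    field_simp
    ring
  · simp only [X1, X2, hrw1, hrw2, hrw3, h2nd1, h2nd2, h2nd3]
    have H : HasDerivAt (fun s => u * pd (0,0,1) P (s,x,u)) _ t := hq3t.const_mul u
    rw [H.deriv]
    simp only [s31]
    ring
  · simp only [X1, X4, hrw1, hrw2, hrw3, h2nd1, h2nd2, h2nd3]
    have H : HasDerivAt (fun s => 2 / deriv g x * pd (0,1,0) P (s,x,u) -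
        (deriv f x / (f x * deriv g x) + 3 * deriv^[2] g x / deriv g x ^ 2) * u *
          pd (0,0,1) P (s,x,u)) _ t :=
      (hq2t.const_mul (2 / deriv g x)).sub
        (hq3t.const_mul ((deriv f x / (f x * deriv g x) + 3 * deriv^[2] g x / deriv g x ^ 2) * u))
    rw [H.deriv]
    simp only [s21, s31]
    ring
  · simp only [X2, X3, hrw1, hrw2, hrw3, h2nd1, h2nd2, h2nd3]
    have H : HasDerivAt (fun v => 4 * t * pd (1,0,0) P (t,x,v)
        + 2 * g x / deriv g x * pd (0,1,0) P (t,x,v) -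
        (deriv f x * g x / (f x * deriv g x) + 3 * g x * deriv^[2] g x / deriv g x ^ 2) * v *
          pd (0,0,1) P (t,x,v)) _ u :=
      ((hq1u.const_mul (4 * t)).add (hq2u.const_mul (2 * g x / deriv g x))).sub
        (((hasDerivAt_id' u).const_mul (deriv f x * g x / (f x * deriv g x)
          + 3 * g x * deriv^[2] g x / deriv g x ^ 2)).mul hq3u)
    have H2 : HasDerivAt (fun s => u * pd (0,0,1) P (s,x,u)) _ t := hq3t.const_mul u
    have H3 : HasDerivAt (fun y => u * pd (0,0,1) P (t,y,u)) _ x := hq3x.const_mul u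
    have H4 : HasDerivAt (fun v => v * pd (0,0,1) P (t,x,v)) _ u :=
      (hasDerivAt_id' u).mul hq3u
    rw [H.deriv, H2.deriv, H3.deriv, H4.deriv]
    simp only [s31, s32]
    ring
  · simp only [X2, X4, hrw1, hrw2, hrw3, h2nd1, h2nd2, h2nd3]
    have H : HasDerivAt (fun v => 2 / deriv g x * pd (0,1,0) P (t,x,v) -
        (deriv f x / (f x * deriv g x) + 3 * deriv^[2] g x / deriv g x ^ 2) * v *
          pd (0,0,1) P (t,x,v)) _ u :=
      (hq2u.const_mul (2 / deriv g x)).sub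
        (((hasDerivAt_id' u).const_mul (deriv f x / (f x * deriv g x)
          + 3 * deriv^[2] g x / deriv g x ^ 2)).mul hq3u)
    have H3 : HasDerivAt (fun y => u * pd (0,0,1) P (t,y,u)) _ x := hq3x.const_mul u
    have H4 : HasDerivAt (fun v => v * pd (0,0,1) P (t,x,v)) _ u :=
      (hasDerivAt_id' u).mul hq3u
    rw [H.deriv, H3.deriv, H4.deriv]
    simp only [s32]
    ring
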